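/- Let Σ be a finite alphabet, d ∈ ℕ+, s ∈ ℕ, and let θ_TE : Σ → ℝ^d and θ_OUTPUT : Σ → ℝ^d be arbitrary. Then there exists a function f : ℝ^d → ℝ^d of the form f = A₅ ∘ relu ∘ A₄ ∘ relu ∘ A₃ ∘ relu ∘ A₂ ∘ relu ∘ A₁, where A₁, …, A₅ are affine maps whose intermediate dimensions are at most max(|Σ|², d), such that for every x ∈ ℝ^d for which some v ∈ Σ satisfies ⟨x, θ_OUTPUT(w)⟩ ≤ ⟨x, θ_OUTPUT(v)⟩ − 2^{−s} for all w ∈ Σ with w ≠ v, one has f(x) = θ_TE(v). That is, a 5-layer ReLU network simulates the decoding (argmax over output logits) followed by re-embedding of the decoded token. -/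

import Mathlib

open Matrix

/-- The ReLU activation, applied coordinatewise. -/
def vrelu {m : ℕ} (u : Fin m → ℝ) : Fin m → ℝ := fun i => max (u i) 0

/-- **Decoding + re-embedding by a 5-layer ReLU network.** For a finite alphabet `A`,
arbitrary token embeddings `te : A → ℝ^d` and output (logit) vectors `out : A → ℝ^d`,
there is a function `f = A₅ ∘ relu ∘ A₄ ∘ relu ∘ A₃ ∘ relu ∘ A₂ ∘ relu ∘ A₁` (the `Aᵢ`
affine, all intermediate dimensions at most `max(|A|², d)`) such that whenever some
token `v` maximizes the logit `⟨x, out v⟩` with margin `2^{−s}`, `f(x) = te v`. -/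
theorem decode_embed_five_layer_relu (A : Type) [Fintype A] (d s : ℕ)
    (te out : A → Fin d → ℝ) :
    ∃ (d1 d2 d3 d4 : ℕ),
      d1 ≤ max (Fintype.card A ^ 2) d ∧ d2 ≤ max (Fintype.card A ^ 2) d ∧
      d3 ≤ max (Fintype.card A ^ 2) d ∧ d4 ≤ max (Fintype.card A ^ 2) d ∧
      ∃ (W1 : Matrix (Fin d1) (Fin d) ℝ) (b1 : Fin d1 → ℝ)
        (W2 : Matrix (Fin d2) (Fin d1) ℝ) (b2 : Fin d2 → ℝ)
        (W3 : Matrix (Fin d3) (Fin d2) ℝ) (b3 : Fin d3 → ℝ)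
        (W4 : Matrix (Fin d4) (Fin d3) ℝ) (b4 : Fin d4 → ℝ)
        (W5 : Matrix (Fin d) (Fin d4) ℝ) (b5 : Fin d → ℝ),
        ∀ (x : Fin d → ℝ) (v : A),
          (∀ w : A, w ≠ v →
            x ⬝ᵥ out w ≤ x ⬝ᵥ out v - (2 : ℝ) ^ (-(s : ℤ))) →
          W5 *ᵥ vrelu (W4 *ᵥ vrelu (W3 *ᵥ vrelu (W2 *ᵥ vrelu (W1 *ᵥ x + b1) + b2) + b3)
              + b4) + b5
            = te v := by
  classical
  set n := Fintype.card A with hn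
  let e : A ≃ Fin n := Fintype.equivFin A
  let p : A × A ≃ Fin (n ^ 2) := Fintype.equivFinOfCardEq (by simp [sq]; rfl)
  set c : ℝ := (2 : ℝ) ^ s with hc
  have hcpos : (0 : ℝ) < c := by positivity
  have hkey : c * (2 : ℝ) ^ (-(s : ℤ)) = 1 := by
    rw [hc, _root_.zpow_neg, zpow_natCast]
    field_simp
  -- the network
  let W1 : Matrix (Fin (n ^ 2)) (Fin d) ℝ :=
    fun i j => c * (out (p.symm i).2 j - out (p.symm i).1 j)
  let b1 : Fin (n ^ 2) → ℝ := fun _ => 1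
  let W2 : Matrix (Fin n) (Fin (n ^ 2)) ℝ :=
    fun i j => if (p.symm j).1 = e.symm i ∧ (p.symm j).2 ≠ e.symm i then -1 else 0
  let b2 : Fin n → ℝ := fun _ => 1
  let W5 : Matrix (Fin d) (Fin n) ℝ := fun i j => te (e.symm j) i
  refine ⟨n ^ 2, n, n, n, le_max_left _ _,
    le_max_of_le_left (Nat.le_self_pow two_ne_zero n),
    le_max_of_le_left (Nat.le_self_pow two_ne_zero n),
    le_max_of_le_left (Nat.le_self_pow two_ne_zero n),
    W1, b1, W2, b2, 1, 0, 1, 0, W5, 0, ?_⟩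
  intro x v hx
  -- layer 1
  have hy : vrelu (W1 *ᵥ x + b1) =
      fun i => max (c * (x ⬝ᵥ out (p.symm i).2 - x ⬝ᵥ out (p.symm i).1) + 1) 0 := by
    funext i
    have : (W1 *ᵥ x) i = c * (x ⬝ᵥ out (p.symm i).2 - x ⬝ᵥ out (p.symm i).1) := by
      simp only [W1, mulVec, dotProduct, mul_sub, Finset.mul_sum,
        ← Finset.sum_sub_distrib]
      exact Finset.sum_congr rfl fun j _ => by ring
    simp [vrelu, this, b1]
  -- layer 2 gives the one-hot indicator of v
  have hg : vrelu (W2 *ᵥ vrelu (W1 *ᵥ x + b1) + b2) =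
      fun i => if e.symm i = v then 1 else 0 := by
    funext i
    rw [hy]
    set u := e.symm i with hu
    have hW2 : (W2 *ᵥ fun i =>
        max (c * (x ⬝ᵥ out (p.symm i).2 - x ⬝ᵥ out (p.symm i).1) + 1) 0) i =
        - ∑ w ∈ Finset.univ.filter (· ≠ u),
            max (c * (x ⬝ᵥ out w - x ⬝ᵥ out u) + 1) 0 := by
      simp only [W2, mulVec, dotProduct]
      rw [← Equiv.sum_comp p]
      simp only [Equiv.symm_apply_apply]
      rw [← Finset.sum_neg_distrib]
      rw [Fintype.sum_prod_type]
      rw [Finset.sum_eq_single u]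
      · rw [Finset.sum_filter]
        refine Finset.sum_congr rfl fun w _ => ?_
        by_cases hw : w ≠ u <;> simp [hw, ← hu]
      · intro a _ ha
        refine Finset.sum_eq_zero fun w _ => by simp [ha, ← hu]
      · simp
    have hadd : ((W2 *ᵥ fun i =>
        max (c * (x ⬝ᵥ out (p.symm i).2 - x ⬝ᵥ out (p.symm i).1) + 1) 0) + b2) i =
        1 - ∑ w ∈ Finset.univ.filter (· ≠ u),
            max (c * (x ⬝ᵥ out w - x ⬝ᵥ out u) + 1) 0 := by
      rw [Pi.add_apply, hW2]; show _ + (1 : ℝ) = _; ring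
    simp only [vrelu]
    rw [hadd]
    by_cases hv : u = v
    · subst hv
      have : ∀ w ∈ Finset.univ.filter (· ≠ u),
          max (c * (x ⬝ᵥ out w - x ⬝ᵥ out u) + 1) 0 = 0 := by
        intro w hw
        rw [Finset.mem_filter] at hw
        have h1 := hx w hw.2
        have : c * (x ⬝ᵥ out w - x ⬝ᵥ out u) + 1 ≤ 0 := by nlinarith
        simp [max_eq_right this]
      rw [Finset.sum_eq_zero this]
      simp
    · -- u ≠ v : the sum is at least 2
      have hmem : v ∈ Finset.univ.filter (· ≠ u) := by
        simp [Ne.symm hv]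
      have hterm : (2 : ℝ) ≤ max (c * (x ⬝ᵥ out v - x ⬝ᵥ out u) + 1) 0 := by
        have h1 := hx u hv
        have : (2 : ℝ) ≤ c * (x ⬝ᵥ out v - x ⬝ᵥ out u) + 1 := by nlinarith
        exact this.trans (le_max_left _ _)
      have hsum : (2 : ℝ) ≤ ∑ w ∈ Finset.univ.filter (· ≠ u),
          max (c * (x ⬝ᵥ out w - x ⬝ᵥ out u) + 1) 0 :=
        hterm.trans (Finset.single_le_sum (f := fun w =>
          max (c * (x ⬝ᵥ out w - x ⬝ᵥ out u) + 1) 0)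
          (fun w _ => le_max_right _ _) hmem)
      have hle : 1 - ∑ w ∈ Finset.univ.filter (· ≠ u),
          max (c * (x ⬝ᵥ out w - x ⬝ᵥ out u) + 1) 0 ≤ 0 := by linarith
      simp [max_eq_right hle, hv]
  rw [hg]
  -- layers 3 and 4 are identities on the nonnegative one-hot vector
  have hid : vrelu ((1 : Matrix (Fin n) (Fin n) ℝ) *ᵥ
      (fun i => if e.symm i = v then (1 : ℝ) else 0) + 0) =
      fun i => if e.symm i = v then 1 else 0 := by
    funext i
    simp only [one_mulVec, add_zero, vrelu]
    by_cases h : e.symm i = v <;> simp [h]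
  rw [hid, hid]
  -- layer 5
  funext i
  simp only [W5, mulVec, dotProduct, Pi.add_apply, Pi.zero_apply, add_zero]
  rw [← Equiv.sum_comp e]
  simp only [Equiv.symm_apply_apply, mul_ite, mul_one, mul_zero]
  simp
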